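/- If B is a Boolean algebra such that the set S = {A ∈ [B]^ω : A is a regular subalgebra of B} is stationary, then player I does not have a winning strategy in the game G on B in which the players alternately choose elements a₀, b₀, a₁, b₁, … of B and player II wins if the subalgebra generated by all chosen elements is a regular subalgebra of B. -/

import Mathlib

def Subalg {B : Type*} [BooleanAlgebra B] (A : Set B) : Prop :=
  ⊥ ∈ A ∧ ⊤ ∈ A ∧ (∀ x ∈ A, ∀ y ∈ A, x ⊔ y ∈ A) ∧ (∀ x ∈ A, xᶜ ∈ A)

/-- `W` is a maximal antichain of (the subalgebra carried by) `A`. -/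
def MaxACIn {B : Type*} [BooleanAlgebra B] (W A : Set B) : Prop :=
  W ⊆ A ∧ ⊥ ∉ W ∧ W.Pairwise (fun x y => x ⊓ y = ⊥) ∧
    ∀ a ∈ A, a ≠ ⊥ → ∃ w ∈ W, a ⊓ w ≠ ⊥

/-- `X` is a regular subalgebra of `A`: every maximal antichain of `X` is a maximal
antichain of `A`. -/
def RegIn {B : Type*} [BooleanAlgebra B] (X A : Set B) : Prop :=
  ∀ W : Set B, MaxACIn W X → MaxACIn W A

/-- `C` is a closed unbounded family of countable subsets of `A`. -/
def ClubIn {B : Type*} (A : Set B) (C : Set (Set B)) : Prop :=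
  (∀ x ∈ C, x ⊆ A ∧ x.Countable) ∧
  (∀ f : ℕ → Set B, (∀ n, f n ∈ C) → Monotone f → (⋃ n, f n) ∈ C) ∧
  (∀ x : Set B, x ⊆ A → x.Countable → ∃ y ∈ C, x ⊆ y)

/-- `S` is stationary in `[A]^ω`: it meets every closed unbounded family. -/
def StatIn {B : Type*} (A : Set B) (S : Set (Set B)) : Prop :=
  ∀ C : Set (Set B), ClubIn A C → (S ∩ C).Nonempty

lemma list_subset_stage {B : Type*} {f : ℕ → Set B} (hf : Monotone f) :
    ∀ l : List B, (∀ a ∈ l, a ∈ ⋃ n, f n) → ∃ n, ∀ a ∈ l, a ∈ f n := by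
  intro l hl
  induction l with
  | nil => exact ⟨0, by simp⟩
  | cons a t ih =>
    obtain ⟨n, hn⟩ := ih (fun x hx => hl x (List.mem_cons_of_mem _ hx))
    obtain ⟨m, hm⟩ := Set.mem_iUnion.mp (hl a List.mem_cons_self)
    refine ⟨max n m, fun x hx => ?_⟩
    rcases List.mem_cons.mp hx with h | h
    · exact hf (le_max_right n m) (h ▸ hm)
    · exact hf (le_max_left n m) (hn x h)

lemma countable_lists {B : Type*} {s : Set B} (hs : s.Countable) :
    {l : List B | ∀ a ∈ l, a ∈ s}.Countable := by
  have := hs.to_subtype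
  have h1 : (Set.range (fun l : List s => l.map Subtype.val)).Countable :=
    Set.countable_range _
  refine h1.mono ?_
  intro l hl
  exact ⟨l.pmap Subtype.mk hl, by simp [List.map_pmap]⟩

def clos {B : Type*} (σ : List B → B) (x : Set B) : ℕ → Set B
  | 0 => x
  | n+1 => clos σ x n ∪ σ '' {l | ∀ a ∈ l, a ∈ clos σ x n}

lemma clos_mono {B : Type*} (σ : List B → B) (x : Set B) : Monotone (clos σ x) :=
  monotone_nat_of_le_succ (fun _ => Set.subset_union_left)

lemma clos_countable {B : Type*} (σ : List B → B) {x : Set B} (hx : x.Countable) :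
    ∀ n, (clos σ x n).Countable := by
  intro n
  induction n with
  | zero => exact hx
  | succ n ih => exact ih.union ((countable_lists ih).image _)

/-- Theorem 6.3 ((a)→(c)): if the countable regular subalgebras of `B` form a
stationary family (i.e. `B` is pseudo-Cohen), then player I has no winning strategy
in the game `G`: for every strategy `σ` of I (producing I'\''s move from II'\''s previous
moves) there is a play `b` of II such that the subalgebra generated by all chosen
elements is a regular subalgebra of `B`, so II wins. -/
theorem no_winning_strategy_of_stationary {B : Type*} [BooleanAlgebra B]
    (hstat : StatIn (Set.univ : Set B)
      {A | A.Countable ∧ Subalg A ∧ RegIn A Set.univ}) :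
    ∀ σ : List B → B, ∃ b : ℕ → B,
      RegIn (⋂₀ {A : Set B | Subalg A ∧
          Set.range b ∪ Set.range (fun n => σ (List.ofFn fun i : Fin n => b i)) ⊆ A})
        Set.univ := by
  intro σ
  set C : Set (Set B) :=
    {x | x.Countable ∧ ∀ l : List B, (∀ a ∈ l, a ∈ x) → σ l ∈ x} with hC
  have hclub : ClubIn (Set.univ : Set B) C := by
    refine ⟨fun x hx => ⟨Set.subset_univ x, hx.1⟩, ?_, ?_⟩
    · intro f hf hmono
      refine ⟨Set.countable_iUnion (fun n => (hf n).1), ?_⟩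
      intro l hl
      obtain ⟨n, hn⟩ := list_subset_stage hmono l hl
      exact Set.mem_iUnion.mpr ⟨n, (hf n).2 l hn⟩
    · intro x _ hxc
      refine ⟨⋃ n, clos σ x n,
        ⟨Set.countable_iUnion (clos_countable σ hxc), ?_⟩, ?_⟩
      · intro l hl
        obtain ⟨n, hn⟩ := list_subset_stage (clos_mono σ x) l hl
        exact Set.mem_iUnion.mpr ⟨n + 1, Or.inr ⟨l, hn, rfl⟩⟩
      · exact Set.subset_iUnion (clos σ x) 0
  obtain ⟨A, hA⟩ := hstat C hclub
  obtain ⟨⟨hAc, hAalg, hAreg⟩, -, hAσ⟩ := hA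
  have hAne : A.Nonempty := ⟨⊥, hAalg.1⟩
  obtain ⟨b, hb⟩ := hAc.exists_eq_range hAne
  refine ⟨b, ?_⟩
  have hX : (⋂₀ {A' : Set B | Subalg A' ∧
      Set.range b ∪ Set.range (fun n => σ (List.ofFn fun i : Fin n => b i)) ⊆ A'})
      = A := by
    apply Set.Subset.antisymm
    · apply Set.sInter_subset_of_mem
      refine ⟨hAalg, Set.union_subset (le_of_eq hb.symm) ?_⟩
      rintro _ ⟨n, rfl⟩
      apply hAσ
      intro a ha
      obtain ⟨i, rfl⟩ := List.mem_ofFn.mp ha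
      exact hb ▸ ⟨(i : ℕ), rfl⟩
    · refine Set.subset_sInter fun t ht => ?_
      exact hb.trans_subset (Set.subset_union_left.trans ht.2)
  rw [hX]
  exact hAreg
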